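/- Let A, B be n×n complex positive definite matrices. For every t ∈ (0, 1), the spectral geometric mean and the arithmetic mean satisfy A ♮_t B ⪯ A ∇_t B in the near order. -/

import Mathlib

open scoped ComplexOrder Matrix

noncomputable section

/-- Real power of a (positive definite) matrix via the continuous functional calculus. -/
def mpow {n : ℕ} (A : Matrix (Fin n) (Fin n) ℂ) (t : ℝ) : Matrix (Fin n) (Fin n) ℂ :=
  cfc (fun x : ℝ => x ^ t) A

/-- The matrix logarithm of a (positive definite) matrix via the continuous functional calculus. -/
def mlog {n : ℕ} (A : Matrix (Fin n) (Fin n) ℂ) : Matrix (Fin n) (Fin n) ℂ :=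
  cfc Real.log A

/-- The metric geometric mean `A ♯ₜ B = A^{1/2} (A^{-1/2} B A^{-1/2})^t A^{1/2}`.
`A ♯ B` is `gmean A B (1/2)`. -/
def gmean {n : ℕ} (A B : Matrix (Fin n) (Fin n) ℂ) (t : ℝ) : Matrix (Fin n) (Fin n) ℂ :=
  mpow A (1/2) * mpow (mpow A (-(1/2)) * B * mpow A (-(1/2))) t * mpow A (1/2)

/-- The Loewner order: `A ≤ B` iff `B - A` is positive semidefinite. -/
def LoewnerLE {n : ℕ} (A B : Matrix (Fin n) (Fin n) ℂ) : Prop :=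
  (B - A).PosSemidef

/-- The near order: `A ⪯ B` iff `I ≤ A⁻¹ ♯ B` in the Loewner order. -/
def NearLE {n : ℕ} (A B : Matrix (Fin n) (Fin n) ℂ) : Prop :=
  LoewnerLE 1 (gmean A⁻¹ B (1/2))

/-- The spectral geometric mean `A ♮ₜ B = (A⁻¹ ♯ B)^t A (A⁻¹ ♯ B)^t`. -/
def smean {n : ℕ} (A B : Matrix (Fin n) (Fin n) ℂ) (t : ℝ) : Matrix (Fin n) (Fin n) ℂ :=
  mpow (gmean A⁻¹ B (1/2)) t * A * mpow (gmean A⁻¹ B (1/2)) t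

/-- The Wasserstein mean `A ◇ₜ B = [(1-t)I + t(A⁻¹ ♯ B)] A [(1-t)I + t(A⁻¹ ♯ B)]`. -/
def wmean {n : ℕ} (A B : Matrix (Fin n) (Fin n) ℂ) (t : ℝ) : Matrix (Fin n) (Fin n) ℂ :=
  (((1 - t : ℝ) : ℂ) • (1 : Matrix (Fin n) (Fin n) ℂ) + ((t : ℝ) : ℂ) • gmean A⁻¹ B (1/2)) * A *
    (((1 - t : ℝ) : ℂ) • (1 : Matrix (Fin n) (Fin n) ℂ) + ((t : ℝ) : ℂ) • gmean A⁻¹ B (1/2))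

/-- The arithmetic mean `A ∇ₜ B = (1-t)A + tB`. -/
def amean {n : ℕ} (A B : Matrix (Fin n) (Fin n) ℂ) (t : ℝ) : Matrix (Fin n) (Fin n) ℂ :=
  ((1 - t : ℝ) : ℂ) • A + ((t : ℝ) : ℂ) • B

/-- The matrix absolute value `|X| = (XᴴX)^{1/2}`. -/
def matAbs {n : ℕ} (X : Matrix (Fin n) (Fin n) ℂ) : Matrix (Fin n) (Fin n) ℂ :=
  mpow (Xᴴ * X) (1/2)

/-- The eigenvalues of a Hermitian matrix listed in nonincreasing order:
`eigDesc hA i` is `λ_{i+1}(A)`, so `eigDesc hA 0 = λ₁(A) ≥ eigDesc hA 1 = λ₂(A) ≥ ⋯`. -/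
def eigDesc {n : ℕ} {A : Matrix (Fin n) (Fin n) ℂ} (hA : A.IsHermitian) : Fin n → ℝ :=
  fun i => (hA.eigenvalues ∘ Tuple.sort hA.eigenvalues) i.rev

namespace SmeanAux
open Matrix
variable {n : ℕ} {A B P Q Z : Matrix (Fin n) (Fin n) ℂ}

lemma contOn (f : ℝ → ℝ) {s : Set ℝ} (hs : s.Finite) : ContinuousOn f s := by
  haveI : DiscreteTopology s := hs.to_subtype.instDiscreteTopology
  rw [continuousOn_iff_continuous_restrict]
  exact continuous_of_discreteTopology

lemma contOnSpec (f : ℝ → ℝ) (A : Matrix (Fin n) (Fin n) ℂ) :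
    ContinuousOn f (spectrum ℝ A) := contOn f A.finite_real_spectrum

lemma spec_pos (hA : A.PosDef) : ∀ x ∈ spectrum ℝ A, 0 < x := by
  intro x hx
  rw [hA.isHermitian.spectrum_real_eq_range_eigenvalues] at hx
  obtain ⟨i, rfl⟩ := hx
  exact hA.eigenvalues_pos i

lemma posDef_mul_mul_conjTranspose (hA : A.PosDef) {B : Matrix (Fin n) (Fin n) ℂ}
    (hB : Function.Injective (Bᴴ).mulVec) : (B * A * Bᴴ).PosDef := by
  refine Matrix.PosDef.of_dotProduct_mulVec_pos (hA.posSemidef.mul_mul_conjTranspose_same B).1 fun x hx => ?_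
  have hx' : Bᴴ *ᵥ x ≠ 0 := fun h => hx (hB (by simpa using h))
  have key : (B * A * Bᴴ) *ᵥ x = B *ᵥ (A *ᵥ (Bᴴ *ᵥ x)) := by
    rw [mulVec_mulVec, mulVec_mulVec]
  rw [key, dotProduct_mulVec, show star x ᵥ* B = star (Bᴴ *ᵥ x) by
    rw [star_mulVec, conjTranspose_conjTranspose]]
  exact hA.dotProduct_mulVec_pos hx'

lemma posSemidef_cfc (hA : A.IsHermitian) {f : ℝ → ℝ}
    (hf : ∀ x ∈ spectrum ℝ A, 0 ≤ f x) : (cfc f A).PosSemidef := by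
  rw [hA.cfc_eq, Matrix.IsHermitian.cfc]
  rw [Unitary.conjStarAlgAut_apply, Matrix.star_eq_conjTranspose]
  refine PosSemidef.mul_mul_conjTranspose_same (posSemidef_diagonal_iff.mpr fun i => ?_) _
  have : 0 ≤ f (hA.eigenvalues i) :=
    hf _ (hA.spectrum_real_eq_range_eigenvalues ▸ Set.mem_range_self i)
  simpa using Complex.zero_le_real.mpr this

lemma posDef_cfc (hA : A.PosDef) {f : ℝ → ℝ}
    (hf : ∀ x ∈ spectrum ℝ A, 0 < f x) : (cfc f A).PosDef := by
  rw [hA.isHermitian.cfc_eq, Matrix.IsHermitian.cfc, Unitary.conjStarAlgAut_apply, Matrix.star_eq_conjTranspose]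
  have hU : Function.Injective
      ((hA.isHermitian.eigenvectorUnitary : Matrix (Fin n) (Fin n) ℂ)ᴴ).mulVec := by
    intro x y hxy
    have h1 : (hA.isHermitian.eigenvectorUnitary : Matrix (Fin n) (Fin n) ℂ) *
        (hA.isHermitian.eigenvectorUnitary : Matrix (Fin n) (Fin n) ℂ)ᴴ = 1 := by
      simpa [Matrix.star_eq_conjTranspose] using
        (Matrix.mem_unitaryGroup_iff).mp (hA.isHermitian.eigenvectorUnitary).2
    have := congrArg ((hA.isHermitian.eigenvectorUnitary : Matrix (Fin n) (Fin n) ℂ) *ᵥ ·) hxy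
    simpa [mulVec_mulVec, h1] using this
  refine posDef_mul_mul_conjTranspose ?_ hU
  refine posDef_diagonal_iff.mpr fun i => ?_
  have : 0 < f (hA.isHermitian.eigenvalues i) :=
    hf _ (hA.isHermitian.spectrum_real_eq_range_eigenvalues ▸ Set.mem_range_self i)
  simpa using Complex.zero_lt_real.mpr this

lemma mpow_mul_mpow (hA : A.PosDef) (s r : ℝ) : mpow A s * mpow A r = mpow A (s + r) := by
  unfold mpow
  rw [← cfc_mul _ _ A (contOnSpec _ A) (contOnSpec _ A)]
  exact cfc_congr fun x hx => (Real.rpow_add (spec_pos hA x hx) s r).symm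

lemma mpow_zero (hA : A.IsHermitian) : mpow A 0 = 1 := by
  unfold mpow
  rw [show (fun x : ℝ => x ^ (0:ℝ)) = (1 : ℝ → ℝ) from funext fun x => Real.rpow_zero x]
  exact cfc_one ℝ A hA

lemma mpow_one (hA : A.IsHermitian) : mpow A 1 = A := by
  unfold mpow
  rw [show (fun x : ℝ => x ^ (1:ℝ)) = (fun x : ℝ => x) from funext fun x => Real.rpow_one x]
  exact cfc_id' ℝ A hA

lemma mpow_isHermitian (A : Matrix (Fin n) (Fin n) ℂ) (t : ℝ) : (mpow A t).IsHermitian :=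
  cfc_predicate _ A

lemma mpow_posDef (hA : A.PosDef) (t : ℝ) : (mpow A t).PosDef :=
  posDef_cfc hA fun x hx => Real.rpow_pos_of_pos (spec_pos hA x hx) t

lemma mpow_cancel (hA : A.PosDef) (s : ℝ) : mpow A s * mpow A (-s) = 1 := by
  rw [mpow_mul_mpow hA, add_neg_cancel, mpow_zero hA.1]

lemma mpow_cancel' (hA : A.PosDef) (s : ℝ) : mpow A (-s) * mpow A s = 1 := by
  rw [mpow_mul_mpow hA, neg_add_cancel, mpow_zero hA.1]

lemma inv_eq_cfc (hA : A.PosDef) : A⁻¹ = cfc (fun x : ℝ => x⁻¹) A := by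
  refine Matrix.inv_eq_left_inv ?_
  have key : cfc (fun x:ℝ => x⁻¹) A * cfc (fun x:ℝ => x) A = 1 := by
    rw [← cfc_mul _ _ A (contOnSpec _ A) (contOnSpec _ A)]
    calc cfc (fun x:ℝ => x⁻¹ * x) A
        = cfc (1 : ℝ → ℝ) A := cfc_congr fun x hx => inv_mul_cancel₀ (spec_pos hA x hx).ne'
      _ = 1 := cfc_one ℝ A hA.1
  exact (congrArg (cfc (fun x:ℝ => x⁻¹) A * ·) (cfc_id' ℝ A hA.1).symm).trans key

lemma mpow_inv (hA : A.PosDef) (t : ℝ) : mpow A⁻¹ t = mpow A (-t) := by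
  unfold mpow
  rw [inv_eq_cfc hA]
  refine Eq.trans (cfc_comp (fun x : ℝ => x ^ t) (fun x : ℝ => x⁻¹) A hA.1
      (contOn _ ((Matrix.finite_real_spectrum (A := A)).image _)) (contOnSpec _ A)).symm ?_
  refine cfc_congr fun x hx => ?_
  have hx' := spec_pos hA x hx
  show (x⁻¹) ^ t = x ^ (-t)
  rw [Real.inv_rpow hx'.le, ← Real.rpow_neg hx'.le]

lemma mul_inj {P Q : Matrix (Fin n) (Fin n) ℂ} (h : Q * P = 1) :
    Function.Injective P.mulVec := fun x y hxy => by
  have := congrArg (Q *ᵥ ·) hxy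
  simpa [mulVec_mulVec, h] using this

lemma psd_conj_herm (hP : P.PosSemidef) {H : Matrix (Fin n) (Fin n) ℂ} (hH : H.IsHermitian) :
    (H * P * H).PosSemidef := by
  have := hP.mul_mul_conjTranspose_same H
  rwa [hH.eq] at this

lemma posDef_conj_herm (hP : P.PosDef) {H : Matrix (Fin n) (Fin n) ℂ} (hH : H.IsHermitian)
    {K : Matrix (Fin n) (Fin n) ℂ} (hK : K * H = 1) : (H * P * H).PosDef := by
  have : (H * P * Hᴴ).PosDef := by
    refine posDef_mul_mul_conjTranspose hP ?_
    rw [hH.eq]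
    exact mul_inj hK
  rwa [hH.eq] at this

lemma real_smul_eq (r : ℝ) (M : Matrix (Fin n) (Fin n) ℂ) : r • M = ((r : ℝ) : ℂ) • M := by
  ext i j
  simp [Complex.real_smul]

lemma psd_real_smul {c : ℝ} (hc : 0 ≤ c) (hP : P.PosSemidef) :
    (((c : ℝ) : ℂ) • P).PosSemidef := by
  have h := hP.mul_mul_conjTranspose_same
    (((Real.sqrt c : ℝ) : ℂ) • (1 : Matrix (Fin n) (Fin n) ℂ))
  have key : (((Real.sqrt c : ℝ) : ℂ) • (1 : Matrix (Fin n) (Fin n) ℂ)) * P *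
      ((((Real.sqrt c : ℝ) : ℂ) • (1 : Matrix (Fin n) (Fin n) ℂ)))ᴴ = ((c : ℝ) : ℂ) • P := by
    rw [conjTranspose_smul, conjTranspose_one]
    simp only [smul_mul_assoc, one_mul, mul_smul_comm, mul_one, smul_smul]
    rw [show star ((Real.sqrt c : ℝ) : ℂ) = ((Real.sqrt c : ℝ) : ℂ) from Complex.conj_ofReal _,
      ← Complex.ofReal_mul, Real.mul_self_sqrt hc]
  rwa [key] at h

lemma posDef_real_smul {c : ℝ} (hc : 0 < c) (hP : P.PosDef) :
    (((c : ℝ) : ℂ) • P).PosDef := by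
  refine Matrix.PosDef.of_dotProduct_mulVec_pos ?_ fun x hx => ?_
  · show (((c : ℝ) : ℂ) • P)ᴴ = ((c : ℝ) : ℂ) • P
    rw [conjTranspose_smul, hP.1.eq,
      show star ((c : ℝ) : ℂ) = ((c : ℝ) : ℂ) from Complex.conj_ofReal _]
  · have h1 := hP.dotProduct_mulVec_pos hx
    rw [smul_mulVec, dotProduct_smul, smul_eq_mul]
    rw [Complex.lt_def] at h1 ⊢
    constructor
    · simp only [Complex.mul_re, Complex.ofReal_re, Complex.ofReal_im, Complex.zero_re,
        zero_mul, sub_zero] at h1 ⊢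
      have := h1.1
      nlinarith
    · simp [Complex.mul_im, ← h1.2]

lemma herm_shift {H : Matrix (Fin n) (Fin n) ℂ} (hH : H.IsHermitian) (x y : Fin n → ℂ) :
    star x ⬝ᵥ (H *ᵥ y) = star (H *ᵥ x) ⬝ᵥ y := by
  rw [dotProduct_mulVec, star_mulVec, hH.eq]


set_option maxHeartbeats 1000000 in
lemma sqrt_dominates (hQ : Q.PosDef) (hZ : Z.PosSemidef)
    (h : (Q - Z * Z).PosSemidef) : (mpow Q (1/2) - Z).PosSemidef := by
  obtain ⟨Q2, hQ2def⟩ : ∃ M, M = mpow Q (1/2) := ⟨_, rfl⟩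
  obtain ⟨Q4, hQ4def⟩ : ∃ M, M = mpow Q (1/4) := ⟨_, rfl⟩
  obtain ⟨Q4i, hQ4idef⟩ : ∃ M, M = mpow Q (-(1/4)) := ⟨_, rfl⟩
  rw [← hQ2def]
  have hQ4h : Q4.IsHermitian := hQ4def ▸ mpow_isHermitian Q _
  have hQ4ih : Q4i.IsHermitian := hQ4idef ▸ mpow_isHermitian Q _
  have hQ2h : Q2.IsHermitian := hQ2def ▸ mpow_isHermitian Q _
  have c1 : Q4 * Q4i = 1 := by rw [hQ4def, hQ4idef]; exact mpow_cancel hQ _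
  have c2 : Q4i * Q4 = 1 := by rw [hQ4def, hQ4idef]; exact mpow_cancel' hQ _
  have hQ42 : Q4 * Q4 = Q2 := by
    rw [hQ4def, hQ2def, mpow_mul_mpow hQ]; norm_num
  have hQ22 : Q2 * Q2 = Q := by
    rw [hQ2def, mpow_mul_mpow hQ]; norm_num [mpow_one hQ.1]
  obtain ⟨T, hTdef⟩ : ∃ M, M = Q4i * Z * Q4i := ⟨_, rfl⟩
  have hT : T.PosSemidef := hTdef ▸ psd_conj_herm hZ hQ4ih
  have hTh : T.IsHermitian := hT.1
  have heig : ∀ i, hTh.eigenvalues i ≤ 1 := by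
    intro i
    obtain ⟨v, hvdef⟩ : ∃ v' : Fin n → ℂ, v' = ⇑(hTh.eigenvectorBasis i) := ⟨_, rfl⟩
    have hv : T *ᵥ v = hTh.eigenvalues i • v := by
      rw [hvdef]; exact hTh.mulVec_eigenvectorBasis i
    have hv0 : v ≠ 0 := by
      intro hcontra
      rw [hvdef] at hcontra
      exact hTh.eigenvectorBasis.orthonormal.ne_zero i (by ext j; exact congrFun hcontra j)
    obtain ⟨u, hudef⟩ : ∃ u' : Fin n → ℂ, u' = Q4i *ᵥ v := ⟨_, rfl⟩
    obtain ⟨w, hwdef⟩ : ∃ w' : Fin n → ℂ, w' = Q4 *ᵥ v := ⟨_, rfl⟩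
    have hw0 : w ≠ 0 := by
      intro hcontra
      apply hv0
      have hvv : Q4i *ᵥ w = v := by rw [hwdef, mulVec_mulVec, c2, one_mulVec]
      rw [hcontra, mulVec_zero] at hvv
      exact hvv.symm
    have hZu : Z *ᵥ u = hTh.eigenvalues i • w := by
      have h1 : Q4 *ᵥ (T *ᵥ v) = Z *ᵥ u := by
        rw [hTdef, mulVec_mulVec, ← mul_assoc, ← mul_assoc, c1, one_mul, hudef, mulVec_mulVec]
      rw [hv, mulVec_smul] at h1
      rw [← h1, hwdef]
    have hnn : 0 ≤ hTh.eigenvalues i := hT.eigenvalues_nonneg i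
    have hq := h.dotProduct_mulVec_nonneg u
    rw [sub_mulVec, dotProduct_sub] at hq
    have e1 : star u ⬝ᵥ (Q *ᵥ u) = star w ⬝ᵥ w := by
      have hQ2u : Q2 *ᵥ u = w := by
        rw [hudef, mulVec_mulVec, ← hQ42, mul_assoc, c1, mul_one, hwdef]
      have hQu : Q2 *ᵥ (Q2 *ᵥ u) = Q *ᵥ u := by rw [mulVec_mulVec, hQ22]
      rw [← hQu, herm_shift hQ2h, hQ2u]
    have e2 : star u ⬝ᵥ ((Z * Z) *ᵥ u) =
        ((hTh.eigenvalues i * hTh.eigenvalues i : ℝ) : ℂ) * (star w ⬝ᵥ w) := by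
      rw [← mulVec_mulVec, herm_shift hZ.1, hZu, star_smul, star_trivial,
        smul_dotProduct, dotProduct_smul, smul_smul, Complex.real_smul, Complex.ofReal_mul]
    rw [e1, e2] at hq
    have hp : 0 < star w ⬝ᵥ w := dotProduct_star_self_pos_iff.mpr hw0
    rw [Complex.lt_def] at hp
    rw [Complex.le_def] at hq
    obtain ⟨hq1, _⟩ := hq
    simp only [Complex.zero_re, Complex.zero_im, Complex.sub_re, Complex.mul_re,
      Complex.ofReal_re, Complex.ofReal_im, zero_mul, sub_zero] at hq1 hp
    have h2 : hTh.eigenvalues i * hTh.eigenvalues i ≤ 1 := by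
      by_contra hcon
      push_neg at hcon
      nlinarith [hp.1, hq1]
    nlinarith [h2, hnn]
  have hT1 : ((1 : Matrix (Fin n) (Fin n) ℂ) - T).PosSemidef := by
    have spec := hTh.spectral_theorem
    have hU1 : (hTh.eigenvectorUnitary : Matrix (Fin n) (Fin n) ℂ) *
        star (hTh.eigenvectorUnitary : Matrix (Fin n) (Fin n) ℂ) = 1 :=
      Matrix.mem_unitaryGroup_iff.mp (hTh.eigenvectorUnitary).2
    have key : (1 : Matrix (Fin n) (Fin n) ℂ) - T =
        (hTh.eigenvectorUnitary : Matrix (Fin n) (Fin n) ℂ) *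
          diagonal (fun i => ((1 - hTh.eigenvalues i : ℝ) : ℂ)) *
          star (hTh.eigenvectorUnitary : Matrix (Fin n) (Fin n) ℂ) := by
      have hd : diagonal (fun i => ((1 - hTh.eigenvalues i : ℝ) : ℂ)) =
          (1 : Matrix (Fin n) (Fin n) ℂ) - diagonal (RCLike.ofReal ∘ hTh.eigenvalues) := by
        rw [← diagonal_one, diagonal_sub]
        exact congrArg diagonal (funext fun i => by push_cast; simp)
      rw [Unitary.conjStarAlgAut_apply] at spec; rw [hd, mul_sub, sub_mul, mul_one, hU1, ← spec]
    rw [key, Matrix.star_eq_conjTranspose]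
    refine PosSemidef.mul_mul_conjTranspose_same (posSemidef_diagonal_iff.mpr fun i => ?_) _
    have : (0:ℝ) ≤ 1 - hTh.eigenvalues i := by linarith [heig i]
    simpa using Complex.zero_le_real.mpr this
  have final := psd_conj_herm hT1 hQ4h
  have key2 : Q4 * ((1 : Matrix (Fin n) (Fin n) ℂ) - T) * Q4 = Q2 - Z := by
    rw [mul_sub, sub_mul, mul_one, hQ42]
    congr 1
    rw [hTdef, ← mul_assoc, ← mul_assoc, c1, one_mul, mul_assoc, c2, mul_one]
  rw [key2] at final
  exact final

end SmeanAux

set_option maxHeartbeats 2000000 in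
/-- `A ♮ₜ B ⪯ A ∇ₜ B` in the near order for all `t ∈ (0,1)`. -/
theorem smean_near_le_amean {n : ℕ} (A B : Matrix (Fin n) (Fin n) ℂ)
    (hA : A.PosDef) (hB : B.PosDef) :
    ∀ t : ℝ, 0 < t → t < 1 → NearLE (smean A B t) (amean A B t) := by
  intro t ht0 ht1
  open SmeanAux in
  have hAi : A⁻¹.PosDef := hA.inv
  obtain ⟨S, hSdef⟩ : ∃ M, M = mpow A (1/2) := ⟨_, rfl⟩
  obtain ⟨Si, hSidef⟩ : ∃ M, M = mpow A (-(1/2)) := ⟨_, rfl⟩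
  have hSh : S.IsHermitian := hSdef ▸ mpow_isHermitian A _
  have hSih : Si.IsHermitian := hSidef ▸ mpow_isHermitian A _
  have cS1 : S * Si = 1 := by rw [hSdef, hSidef]; exact mpow_cancel hA _
  have cS2 : Si * S = 1 := by rw [hSdef, hSidef]; exact mpow_cancel' hA _
  have hSS : S * S = A := by rw [hSdef, mpow_mul_mpow hA]; norm_num [mpow_one hA.1]
  have hmi1 : mpow A⁻¹ (1/2) = Si := by rw [mpow_inv hA, hSidef]
  have hmi2 : mpow A⁻¹ (-(1/2)) = S := by rw [mpow_inv hA, neg_neg, hSdef]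
  obtain ⟨C, hC_eq⟩ : ∃ M, M = gmean A⁻¹ B (1/2) := ⟨_, rfl⟩
  have hM : (S * B * S).PosDef := posDef_conj_herm hB hSh cS2
  have hMp : (mpow (S * B * S) (1/2)).PosDef := mpow_posDef hM _
  have hCdef : C = Si * mpow (S * B * S) (1/2) * Si := by
    rw [hC_eq]; unfold gmean; rw [hmi1, hmi2]
  have hC : C.PosDef := by rw [hCdef]; exact posDef_conj_herm hMp hSih cS1
  have hCh : C.IsHermitian := hC.1
  have hCAC : C * A * C = B := by
    rw [hCdef, ← hSS]
    obtain ⟨Xm, hXmdef⟩ : ∃ M, M = mpow (S * B * S) (1/2) := ⟨_, rfl⟩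
    rw [← hXmdef]
    have hXX : ∀ Y', Xm * (Xm * Y') = S * (B * (S * Y')) := by
      intro Y'
      rw [← mul_assoc, hXmdef, mpow_mul_mpow hM, show (1/2 : ℝ) + 1/2 = 1 by norm_num,
        mpow_one hM.1, mul_assoc, mul_assoc]
    have l1 : ∀ Y', Si * (S * Y') = Y' := fun Y' => by rw [← mul_assoc, cS2, one_mul]
    have l2 : ∀ Y', S * (Si * Y') = Y' := fun Y' => by rw [← mul_assoc, cS1, one_mul]
    calc Si * Xm * Si * (S * S) * (Si * Xm * Si)
        = Si * (Xm * (Si * (S * (S * (Si * (Xm * Si)))))) := by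
          simp only [mul_assoc]
      _ = B := by
          simp only [l2, l1, hXX, cS1, mul_one]
  -- powers of C
  obtain ⟨Ct, hCtdef⟩ : ∃ M, M = mpow C t := ⟨_, rfl⟩
  obtain ⟨Cti, hCtidef⟩ : ∃ M, M = mpow C (-t) := ⟨_, rfl⟩
  have hCth : Ct.IsHermitian := hCtdef ▸ mpow_isHermitian C _
  have cCt1 : Ct * Cti = 1 := by rw [hCtdef, hCtidef]; exact mpow_cancel hC _
  have cCt2 : Cti * Ct = 1 := by rw [hCtdef, hCtidef]; exact mpow_cancel' hC _
  -- W and D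
  obtain ⟨W, hWdef⟩ : ∃ M,
      M = cfc (fun x : ℝ => (1-t) * x ^ (-t) + t * x ^ (1-t)) C := ⟨_, rfl⟩
  have hWpd : W.PosDef := by
    rw [hWdef]
    refine posDef_cfc hC fun x hx => ?_
    have hx' := spec_pos hC x hx
    have h1 : 0 < x ^ (-t) := Real.rpow_pos_of_pos hx' _
    have h2 : 0 < x ^ (1-t) := Real.rpow_pos_of_pos hx' _
    have : (0:ℝ) < 1 - t := by linarith
    positivity
  have hWh : W.IsHermitian := hWdef ▸ cfc_predicate _ C
  have hW1 : (W - 1).PosSemidef := by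
    have e : W - 1 = cfc (fun x : ℝ => ((1-t) * x ^ (-t) + t * x ^ (1-t)) - 1) C := by
      rw [cfc_sub _ _ C (contOnSpec _ C) (contOnSpec _ C), ← hWdef,
        show cfc (fun _ : ℝ => (1:ℝ)) C = 1 from cfc_one ℝ C hC.1]
    rw [e]
    refine posSemidef_cfc hC.1 fun x hx => ?_
    have hx' := spec_pos hC x hx
    have am := Real.geom_mean_le_arith_mean2_weighted (by linarith : (0:ℝ) ≤ 1 - t) ht0.le
      (Real.rpow_pos_of_pos hx' (-t)).le (Real.rpow_pos_of_pos hx' (1-t)).le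
      (by ring : (1 - t) + t = 1)
    have key : (x ^ (-t)) ^ (1-t) * (x ^ (1-t)) ^ t = 1 := by
      rw [← Real.rpow_mul hx'.le, ← Real.rpow_mul hx'.le, ← Real.rpow_add hx',
        show -t * (1-t) + (1-t) * t = 0 by ring, Real.rpow_zero]
    rw [key] at am
    linarith
  obtain ⟨D, hDdef⟩ : ∃ M,
      M = ((1 - t : ℝ) : ℂ) • (1 : Matrix (Fin n) (Fin n) ℂ) + ((t : ℝ) : ℂ) • C := ⟨_, rfl⟩
  have hcfcD : cfc (fun x : ℝ => (1-t) + t * x) C = D := by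
    have e1 : cfc (fun x : ℝ => (1-t) + t * x) C
        = cfc (fun _ : ℝ => (1-t)) C + cfc (fun x : ℝ => t * x) C :=
      cfc_add C _ _ (contOnSpec _ C) (contOnSpec _ C)
    have e2 : cfc (fun _ : ℝ => (1-t)) C = algebraMap ℝ _ (1-t) := cfc_const _ C hC.1
    have e3 : cfc (fun x : ℝ => t * x) C = t • C := cfc_const_mul_id t C hC.1
    rw [e1, e2, e3, hDdef, Algebra.algebraMap_eq_smul_one, real_smul_eq, real_smul_eq]
  have hWCt : ∀ Y', W * (Ct * Y') = D * Y' := by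
    intro Y'
    rw [← mul_assoc]
    congr 1
    rw [hWdef, hCtdef]
    show _ * cfc (fun x : ℝ => x ^ t) C = D
    rw [← cfc_mul _ _ C (contOnSpec _ C) (contOnSpec _ C), ← hcfcD]
    refine cfc_congr fun x hx => ?_
    have hx' := spec_pos hC x hx
    rw [add_mul, mul_assoc, mul_assoc, ← Real.rpow_add hx', ← Real.rpow_add hx',
      show -t + t = (0:ℝ) by ring, show 1 - t + t = (1:ℝ) by ring,
      Real.rpow_zero, Real.rpow_one, mul_one]
  have hCtW : ∀ Y', Ct * (W * Y') = D * Y' := by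
    intro Y'
    rw [← mul_assoc]
    congr 1
    rw [hWdef, hCtdef]
    show cfc (fun x : ℝ => x ^ t) C * _ = D
    rw [← cfc_mul _ _ C (contOnSpec _ C) (contOnSpec _ C), ← hcfcD]
    refine cfc_congr fun x hx => ?_
    have hx' := spec_pos hC x hx
    rw [mul_add, ← mul_assoc, ← mul_assoc, mul_comm (x ^ t) (1-t), mul_comm (x ^ t) t,
      mul_assoc (1-t), mul_assoc t, ← Real.rpow_add hx', ← Real.rpow_add hx',
      show t + -t = (0:ℝ) by ring, show t + (1 - t) = (1:ℝ) by ring,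
      Real.rpow_zero, Real.rpow_one, mul_one]
  -- X = smean
  obtain ⟨X, hXdef⟩ : ∃ M, M = Ct * A * Ct := ⟨_, rfl⟩
  have hsmean : smean A B t = X := by
    rw [hXdef, hCtdef]; unfold smean; rw [← hC_eq]
  have hX : X.PosDef := hXdef ▸ posDef_conj_herm hA hCth cCt2
  obtain ⟨X2, hX2def⟩ : ∃ M, M = mpow X (1/2) := ⟨_, rfl⟩
  obtain ⟨X2i, hX2idef⟩ : ∃ M, M = mpow X (-(1/2)) := ⟨_, rfl⟩
  have hX2h : X2.IsHermitian := hX2def ▸ mpow_isHermitian X _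
  have hX2ih : X2i.IsHermitian := hX2idef ▸ mpow_isHermitian X _
  have cX1 : X2 * X2i = 1 := by rw [hX2def, hX2idef]; exact mpow_cancel hX _
  have cX2 : X2i * X2 = 1 := by rw [hX2def, hX2idef]; exact mpow_cancel' hX _
  have hX22 : ∀ Y', X2 * (X2 * Y') = X * Y' := by
    intro Y'
    rw [← mul_assoc, hX2def, mpow_mul_mpow hX, show (1/2 : ℝ) + 1/2 = 1 by norm_num,
      mpow_one hX.1]
  -- Y = amean
  obtain ⟨Y, hYdef⟩ : ∃ M, M = amean A B t := ⟨_, rfl⟩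
  have hY : Y.PosDef := by
    rw [hYdef]; unfold amean
    exact Matrix.PosDef.add (posDef_real_smul (by linarith) hA) (posDef_real_smul ht0 hB)
  -- W X W = D A D
  have hWXW : W * (X * W) = D * (A * D) := by
    rw [hXdef]
    calc W * (Ct * A * Ct * W)
        = W * (Ct * (A * (Ct * W))) := by simp only [mul_assoc]
      _ = D * (A * D) := by
          rw [show Ct * W = D from by simpa [mul_one] using hCtW 1, hWCt]
  -- key positivity: Y - D A D
  have hDh : D.IsHermitian := by
    rw [hDdef]
    show (_ + _)ᴴ = _
    rw [Matrix.conjTranspose_add, Matrix.conjTranspose_smul, Matrix.conjTranspose_smul,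
      Matrix.conjTranspose_one, hC.1.eq, Complex.star_def, Complex.conj_ofReal,
      Complex.conj_ofReal]
  have hYD : (Y - D * (A * D)).PosSemidef := by
    have hkey : Y - D * (A * D) = ((t * (1 - t) : ℝ) : ℂ) • ((1 - C) * A * (1 - C)) := by
      rw [hYdef, hDdef]
      unfold amean
      rw [← hCAC]
      simp only [add_mul, mul_add, sub_mul, mul_sub, smul_mul_assoc, mul_smul_comm,
        one_mul, mul_one, smul_smul, mul_assoc]
      push_cast
      match_scalars <;> ring
    rw [hkey]
    exact psd_real_smul (by nlinarith) (psd_conj_herm hA.posSemidef (Matrix.isHermitian_one.sub hC.1))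
  -- Q and Z
  obtain ⟨Qm, hQmdef⟩ : ∃ M, M = X2 * Y * X2 := ⟨_, rfl⟩
  have hQm : Qm.PosDef := hQmdef ▸ posDef_conj_herm hY hX2h cX2
  obtain ⟨Zm, hZmdef⟩ : ∃ M, M = X2 * W * X2 := ⟨_, rfl⟩
  have hZm : Zm.PosSemidef := hZmdef ▸ psd_conj_herm hWpd.posSemidef hX2h
  have hsub : (Qm - Zm * Zm).PosSemidef := by
    have e : Qm - Zm * Zm = X2 * (Y - W * (X * W)) * X2 := by
      rw [hQmdef, hZmdef]
      simp only [mul_sub, sub_mul, mul_assoc, hX22]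
    rw [e, hWXW]
    exact psd_conj_herm hYD hX2h
  have hcore : (mpow Qm (1/2) - Zm).PosSemidef := sqrt_dominates hQm hZm hsub
  -- assemble
  have hGdef : gmean (smean A B t)⁻¹ (amean A B t) (1/2) = X2i * mpow Qm (1/2) * X2i := by
    unfold gmean
    rw [hsmean, ← hYdef, mpow_inv hX, mpow_inv hX, neg_neg, ← hX2def, ← hX2idef, ← hQmdef]
  show LoewnerLE 1 (gmean (smean A B t)⁻¹ (amean A B t) (1/2))
  show (gmean (smean A B t)⁻¹ (amean A B t) (1/2) - 1).PosSemidef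
  rw [hGdef]
  have hGW : (X2i * mpow Qm (1/2) * X2i - W).PosSemidef := by
    have hX2i2 : ∀ Y', X2i * (X2 * Y') = Y' := fun Y' => by rw [← mul_assoc, cX2, one_mul]
    have e : X2i * mpow Qm (1/2) * X2i - W = X2i * (mpow Qm (1/2) - Zm) * X2i := by
      rw [hZmdef]
      simp only [mul_sub, sub_mul, mul_assoc, cX1, mul_one, hX2i2]
    rw [e]
    exact psd_conj_herm hcore hX2ih
  have hfin := hGW.add hW1
  rwa [sub_add_sub_cancel] at hfin
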